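/- For all integers j ≥ 1 and k ≥ 1, ν_3(b(j,k)) ≥ j+1+⌊(9k−9)/2⌋; equivalently, 3^{j+1+⌊(9k−9)/2⌋} divides b(j,k). -/
import Mathlib


/-- The matrix `m(i,j)` of Hirschhorn: `m(i,j) = 0` whenever `i = 0` or `j = 0`
(corresponding to nonpositive indices), `m(1,1) = 9`, `m(2,1) = 6`, `m(3,1) = 1`,
`m(i,1) = 0` for `i ≥ 4`, and for `j ≥ 2`,
`m(i,j) = 27·m(i-1,j-1) + 9·m(i-2,j-1) + m(i-3,j-1)`
(truncated subtraction correctly yields the prescribed value `0` at nonpositive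
first arguments). -/
def mCoef : ℕ → ℕ → ℤ
  | _, 0 => 0
  | 0, _ => 0
  | 1, 1 => 9
  | 2, 1 => 6
  | 3, 1 => 1
  | _ + 4, 1 => 0
  | i, j + 2 => 27 * mCoef (i - 1) (j + 1) + 9 * mCoef (i - 2) (j + 1) + mCoef (i - 3) (j + 1)

/-- The matrix `b(j,k)`: `b(1,1) = 9`, `b(1,k) = 0` for `k ≥ 2`, and
`b(j+1,k) = ∑_{i≥1} b(j,i)·m(4i+1,i+k)`.  All terms with `i > 3k + 3` vanish
(since `m(i',j') = 0` unless `⌊(i'+2)/3⌋ ≤ j'`), so the sum may be truncated there. -/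
def bCoef : ℕ → ℕ → ℤ
  | 1, 1 => 9
  | j + 2, k => ∑ i ∈ Finset.Icc 1 (3 * k + 3), bCoef (j + 1) i * mCoef (4 * i + 1) (i + k)
  | _, _ => 0

lemma mCoef_zero_left (j : ℕ) : mCoef 0 j = 0 := by cases j <;> simp [mCoef]

lemma mCoef_zero_right (i : ℕ) : mCoef i 0 = 0 := by cases i <;> simp [mCoef]

lemma mCoef_rec (i j : ℕ) : mCoef (i+1) (j+2) =
    27 * mCoef i (j + 1) + 9 * mCoef (i+1 - 2) (j + 1) + mCoef (i+1 - 3) (j + 1) := by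
  simp [mCoef]

/-- `m(i,j) = 0` when `i > 3j`. -/
lemma mCoef_vanish : ∀ j i, 3*j < i → mCoef i j = 0
  | 0, i, _ => mCoef_zero_right i
  | 1, i, h => by
      obtain ⟨n, rfl⟩ : ∃ n, i = n + 4 := ⟨i - 4, by omega⟩
      simp [mCoef]
  | (j+2), i, h => by
      obtain ⟨n, rfl⟩ : ∃ n, i = n + 1 := ⟨i - 1, by omega⟩
      rw [mCoef_rec, mCoef_vanish (j+1) n (by omega), mCoef_vanish (j+1) (n+1-2) (by omega),
        mCoef_vanish (j+1) (n+1-3) (by omega)]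
      ring

/-- The 3-adic lower bound exponent for `mCoef i j`:
`ν₃(m(i,j)) ≥ (3j - i) + ⌈(3j - 2 - i)/2⌉` (positive parts). -/
def mExp (i j : ℕ) : ℕ := (3*j - i) + (3*j - 1 - i)/2

/-- The key 3-adic bound on the entries of `m`. -/
lemma mCoef_dvd : ∀ j i, (3:ℤ)^(mExp i j) ∣ mCoef i j
  | 0, i => by rw [mCoef_zero_right]; exact dvd_zero _
  | 1, 0 => by rw [mCoef_zero_left]; exact dvd_zero _
  | 1, 1 => by norm_num [mCoef, mExp]
  | 1, 2 => by norm_num [mCoef, mExp]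
  | 1, 3 => by norm_num [mCoef, mExp]
  | 1, (n+4) => by simp [mCoef]
  | (j+2), 0 => by rw [mCoef_zero_left]; exact dvd_zero _
  | (j+2), (n+1) => by
      rw [mCoef_rec]
      refine dvd_add (dvd_add ?_ ?_) ?_
      · have h1 := mCoef_dvd (j+1) n
        calc (3:ℤ)^(mExp (n+1) (j+2)) ∣ 3^(3 + mExp n (j+1)) := by
              refine pow_dvd_pow 3 ?_
              unfold mExp
              rcases Nat.even_or_odd j with ⟨y, hy⟩ | ⟨y, hy⟩ <;>
                rcases Nat.even_or_odd n with ⟨x, hx⟩ | ⟨x, hx⟩ <;> subst hx hy <;> omega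
          _ = 3^3 * 3^(mExp n (j+1)) := pow_add 3 3 _
          _ ∣ 27 * mCoef n (j+1) := mul_dvd_mul (by norm_num) h1
      · match n with
        | 0 =>
          rw [show (0+1-2 : ℕ) = 0 from rfl, mCoef_zero_left, mul_zero]
          exact dvd_zero _
        | (m+1) =>
          have h2 := mCoef_dvd (j+1) m
          calc (3:ℤ)^(mExp (m+2) (j+2)) ∣ 3^(2 + mExp m (j+1)) := by
                refine pow_dvd_pow 3 ?_
                unfold mExp
                rcases Nat.even_or_odd j with ⟨y, hy⟩ | ⟨y, hy⟩ <;>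
                  rcases Nat.even_or_odd m with ⟨x, hx⟩ | ⟨x, hx⟩ <;> subst hx hy <;> omega
            _ = 3^2 * 3^(mExp m (j+1)) := pow_add 3 2 _
            _ ∣ 9 * mCoef (m+1+1-2) (j+1) := mul_dvd_mul (by norm_num) h2
      · match n with
        | 0 => rw [show (0+1-3 : ℕ) = 0 from rfl, mCoef_zero_left]; exact dvd_zero _
        | 1 => rw [show (1+1-3 : ℕ) = 0 from rfl, mCoef_zero_left]; exact dvd_zero _
        | (m+2) =>
          have h3 := mCoef_dvd (j+1) m
          refine (pow_dvd_pow 3 ?_).trans h3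
          unfold mExp
          rcases Nat.even_or_odd j with ⟨y, hy⟩ | ⟨y, hy⟩ <;>
            rcases Nat.even_or_odd m with ⟨x, hx⟩ | ⟨x, hx⟩ <;> subst hx hy <;> omega

/-- The arithmetic inequality driving the induction on `j`. -/
lemma key_ineq (i k : ℕ) (h1 : 1 ≤ i) (h2 : i < 3*k) :
    1 + (9*k-9)/2 ≤ (9*i-9)/2 + mExp (4*i+1) (i+k) := by
  unfold mExp
  rcases Nat.even_or_odd i with ⟨x, hx⟩ | ⟨x, hx⟩ <;>
    rcases Nat.even_or_odd k with ⟨y, hy⟩ | ⟨y, hy⟩ <;> subst hx hy <;> omega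

/-- `ν₃(b(j,k)) ≥ j + 1 + ⌊(9k-9)/2⌋` for `j, k ≥ 1`: equivalently,
`3 ^ (j + 1 + ⌊(9k-9)/2⌋)` divides `b(j,k)` (for `k ≥ 1` the quantity `9k - 9` is
nonnegative, so the floor is the natural-number division `(9k - 9)/2`). -/
theorem bCoef_three_adic_bound (j k : ℕ) (hj : 1 ≤ j) (hk : 1 ≤ k) :
    (3 : ℤ) ^ (j + 1 + (9 * k - 9) / 2) ∣ bCoef j k := by
  induction j, hj using Nat.le_induction generalizing k with
  | base =>
    match k, hk with
    | 1, _ => show (3:ℤ)^2 ∣ (9 : ℤ); norm_num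
    | (k+2), _ =>
      have : bCoef 1 (k+2) = 0 := by simp [bCoef]
      rw [this]; exact dvd_zero _
  | succ j hj ih =>
    obtain ⟨j', rfl⟩ : ∃ j', j = j' + 1 := ⟨j - 1, by omega⟩
    have hrec : bCoef (j'+2) k =
        ∑ i ∈ Finset.Icc 1 (3 * k + 3), bCoef (j' + 1) i * mCoef (4 * i + 1) (i + k) := by
      simp [bCoef]
    rw [hrec]
    refine Finset.dvd_sum ?_
    intro i hi
    simp only [Finset.mem_Icc] at hi
    rcases Nat.lt_or_ge i (3*k) with hlt | hge
    · have hb := ih i hi.1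
      have hm := mCoef_dvd (i+k) (4*i+1)
      calc (3:ℤ)^(j'+1+1 + 1 + (9*k-9)/2)
          ∣ 3^((j'+1+1+(9*i-9)/2) + mExp (4*i+1) (i+k)) := by
            refine pow_dvd_pow 3 ?_
            have := key_ineq i k hi.1 hlt
            omega
        _ = 3^(j'+1+1+(9*i-9)/2) * 3^(mExp (4*i+1) (i+k)) := pow_add 3 _ _
        _ ∣ bCoef (j'+1) i * mCoef (4*i+1) (i+k) := mul_dvd_mul hb hm
    · rw [mCoef_vanish (i+k) (4*i+1) (by omega), mul_zero]
      exact dvd_zero _
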